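/- Suppose G and G' are L-sparse shuffle graphs on {1,…,N}. Then f_{G,G'} ≤ (L!)^{|E(G,G')|}. -/

import Mathlib

open Finset

namespace RiffleShuffle

/-- The connected component of the vertex `v` in the shuffle graph on `{0,…,N-1}` whose edge
set is `D` (edges being recorded as consecutive pairs `(i, i+1)`): `w` lies in the component
of `v` iff every consecutive edge between `v` and `w` belongs to `D`. -/
def comp {N : ℕ} (D : Finset (Fin N × Fin N)) (v : Fin N) : Finset (Fin N) :=
  univ.filter (fun w => ∀ e : Fin N × Fin N, (e.2 : ℕ) = (e.1 : ℕ) + 1 →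
    min v w ≤ e.1 → e.2 ≤ max v w → e ∈ D)

/-- The set of connected components of a shuffle graph. -/
def comps {N : ℕ} (D : Finset (Fin N × Fin N)) : Finset (Finset (Fin N)) :=
  univ.image (comp D)

/-- `π^G`: the function obtained from `π` by rearranging, within each connected component of
the shuffle graph with edge set `D`, the values of `π` into increasing order.  The value at
`i` is the `r`-th smallest value of `π` on the component of `i`, where `r` is the rank of `i`
inside its component. -/
def permG {N : ℕ} (D : Finset (Fin N × Fin N)) (π : Equiv.Perm (Fin N)) : Fin N → Fin N :=
  fun i => (Finset.sort ((comp D i).image π) (· ≤ ·)).getD (((comp D i).filter (· < i)).card) i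

/-- `f_{G,σ} = N! ⬝ P[π^G = σ]` for `π` uniform, i.e. the number of `π` with `π^G = σ`. -/
def fG {N : ℕ} (D : Finset (Fin N × Fin N)) (σ : Equiv.Perm (Fin N)) : ℝ :=
  ((univ.filter (fun π : Equiv.Perm (Fin N) => permG D π = ⇑σ)).card : ℝ)

/-- `f_{G,G'} = E_σ [f_{G,σ} ⬝ f_{G',σ}]` for a uniformly random permutation `σ`. -/
noncomputable def fGG {N : ℕ} (D D' : Finset (Fin N × Fin N)) : ℝ :=
  (∑ σ : Equiv.Perm (Fin N), fG D σ * fG D' σ) / (Nat.factorial N : ℝ)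

/-- A shuffle graph with edge set `D` is `L`-sparse if every window of `L` consecutive
vertices `{i, …, i+L-1}` contains at most `L/3` of its edges. -/
def LSparse {N : ℕ} (L : ℕ) (D : Finset (Fin N × Fin N)) : Prop :=
  ∀ i : ℕ, ((D.filter (fun e => i ≤ (e.1 : ℕ) ∧ (e.2 : ℕ) ≤ i + L - 1)).card : ℝ) ≤ (L : ℝ) / 3

lemma mem_comp {N : ℕ} {D : Finset (Fin N × Fin N)} {v w : Fin N} :
    w ∈ comp D v ↔ ∀ e : Fin N × Fin N, (e.2 : ℕ) = (e.1 : ℕ) + 1 →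
      min (v:ℕ) (w:ℕ) ≤ (e.1:ℕ) → (e.2:ℕ) ≤ max (v:ℕ) (w:ℕ) → e ∈ D := by
  simp only [comp, mem_filter, mem_univ, true_and]
  have key : ∀ e : Fin N × Fin N, ((min v w ≤ e.1 ↔ min (v:ℕ) (w:ℕ) ≤ (e.1:ℕ)) ∧
      (e.2 ≤ max v w ↔ (e.2:ℕ) ≤ max (v:ℕ) (w:ℕ))) := by
    intro e
    constructor
    · rw [Fin.le_def]; rfl
    · rw [Fin.le_def]; rfl
  constructor
  · intro h e h1 h2 h3
    exact h e h1 ((key e).1.mpr h2) ((key e).2.mpr h3)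
  · intro h e h1 h2 h3
    exact h e h1 ((key e).1.mp h2) ((key e).2.mp h3)

lemma mem_comp_self {N : ℕ} (D : Finset (Fin N × Fin N)) (v : Fin N) : v ∈ comp D v := by
  rw [mem_comp]; intro e h1 h2 h3; omega

lemma comp_symm {N : ℕ} {D : Finset (Fin N × Fin N)} {v w : Fin N} (h : w ∈ comp D v) :
    v ∈ comp D w := by
  rw [mem_comp] at h ⊢; intro e h1 h2 h3
  exact h e h1 (by omega) (by omega)

lemma comp_trans {N : ℕ} {D : Finset (Fin N × Fin N)} {u v w : Fin N}
    (h1 : v ∈ comp D u) (h2 : w ∈ comp D v) : w ∈ comp D u := by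
  rw [mem_comp] at h1 h2 ⊢
  intro e he hmin hmax
  rcases le_or_gt (e.2 : ℕ) (max (u:ℕ) (v:ℕ)) with h | h
  · rcases le_or_gt (min (u:ℕ) (v:ℕ)) (e.1:ℕ) with h' | h'
    · exact h1 e he h' h
    · exact h2 e he (by omega) (by omega)
  · exact h2 e he (by omega) (by omega)

lemma comp_eq_of_mem {N : ℕ} {D : Finset (Fin N × Fin N)} {v w : Fin N} (h : w ∈ comp D v) :
    comp D w = comp D v := by
  ext x
  exact ⟨fun hx => comp_trans h hx, fun hx => comp_trans (comp_symm h) hx⟩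

/-- interval property -/
lemma mem_comp_of_between {N : ℕ} {D : Finset (Fin N × Fin N)} {v w c : Fin N}
    (h : w ∈ comp D v) (h1 : min (v:ℕ) (w:ℕ) ≤ (c:ℕ)) (h2 : (c:ℕ) ≤ max (v:ℕ) (w:ℕ)) :
    c ∈ comp D v := by
  rw [mem_comp] at h ⊢
  intro e he hmin hmax
  exact h e he (by omega) (by omega)

/-- adjacent members of a component give an edge -/
lemma edge_mem_of_adj {N : ℕ} {D : Finset (Fin N × Fin N)} {v a b : Fin N}
    (ha : a ∈ comp D v) (hb : b ∈ comp D v) (hab : (b:ℕ) = (a:ℕ) + 1) : (a, b) ∈ D := by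
  have h : b ∈ comp D a := comp_trans (comp_symm ha) hb
  rw [mem_comp] at h
  exact h (a, b) hab (by show min (a:ℕ) (b:ℕ) ≤ (a:ℕ); omega) (by show ((b:ℕ) ≤ max (a:ℕ) (b:ℕ)); omega)

/-- an edge of `D` joins its endpoints -/
lemma mem_comp_of_edge {N : ℕ} {D : Finset (Fin N × Fin N)} {e : Fin N × Fin N}
    (he : e ∈ D) (h2 : (e.2:ℕ) = (e.1:ℕ) + 1) : e.2 ∈ comp D e.1 := by
  rw [mem_comp]
  intro f hf hmin hmax
  have : f = e := by
    have h1 : (f.1:ℕ) = (e.1:ℕ) := by omega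
    have h2' : (f.2:ℕ) = (e.2:ℕ) := by omega
    exact Prod.ext (Fin.ext h1) (Fin.ext h2')
  rwa [this]

lemma comp_mono {N : ℕ} {D E : Finset (Fin N × Fin N)} (h : D ⊆ E) (v : Fin N) :
    comp D v ⊆ comp E v := by
  intro w hw
  rw [mem_comp] at hw ⊢
  intro e he hmin hmax
  exact h (hw e he hmin hmax)

lemma comp_inter {N : ℕ} (D D' : Finset (Fin N × Fin N)) (v : Fin N) :
    comp (D ∩ D') v = comp D v ∩ comp D' v := by
  ext w
  simp only [mem_inter, mem_comp]
  constructor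
  · intro h
    exact ⟨fun e a b c => (h e a b c).1, fun e a b c => (h e a b c).2⟩
  · intro h e a b c
    exact ⟨h.1 e a b c, h.2 e a b c⟩

lemma comp_empty {N : ℕ} (v : Fin N) : comp (∅ : Finset (Fin N × Fin N)) v = {v} := by
  ext w
  simp only [mem_singleton, mem_comp, Finset.notMem_empty]
  constructor
  · intro h
    by_contra hne
    have hne' : (v:ℕ) ≠ (w:ℕ) := fun h' => hne (Fin.ext h'.symm)
    have hlt : min (v:ℕ) (w:ℕ) < max (v:ℕ) (w:ℕ) := by omega
    have hN : min (v:ℕ) (w:ℕ) + 1 < N := lt_of_le_of_lt hlt (by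
      rcases max_cases (v:ℕ) (w:ℕ) with ⟨h1,_⟩|⟨h1,_⟩ <;> rw [h1] <;> [exact v.isLt; exact w.isLt])
    exact h (⟨min (v:ℕ) (w:ℕ), by omega⟩, ⟨min (v:ℕ) (w:ℕ)+1, hN⟩) rfl (le_refl _) hlt
  · intro h e _ _ _
    exact absurd (h ▸ rfl : (v:ℕ) = (w:ℕ)) (by omega)

section SortLemmas
set_option linter.unusedSectionVars false
variable {α : Type*} [LinearOrder α] [DecidableEq α]

lemma filter_length_sorted {l : List α} (hs : l.Pairwise (· < ·)) (k : ℕ) (hk : k < l.length)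
    (p : α → Prop) [DecidablePred p] (hp : ∀ a, p a ↔ a < l.get ⟨k, hk⟩) :
    (l.filter (fun a => decide (p a))).length = k := by
  have hsplit : l = l.take k ++ l.drop k := (List.take_append_drop k l).symm
  rw [List.pairwise_iff_getElem] at hs
  have h1 : (l.take k).filter (fun a => decide (p a)) = l.take k := by
    rw [List.filter_eq_self]
    intro a ha
    rw [List.mem_take_iff_getElem] at ha
    obtain ⟨i, hi, rfl⟩ := ha
    simp only [decide_eq_true_eq]
    rw [hp]
    exact hs i k (by omega) hk (by omega)
  have h2 : (l.drop k).filter (fun a => decide (p a)) = [] := by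
    rw [List.filter_eq_nil_iff]
    intro a ha
    rw [List.mem_drop_iff_getElem] at ha
    obtain ⟨i, hi, rfl⟩ := ha
    simp only [decide_eq_true_eq]
    rw [hp]
    rcases Nat.eq_or_lt_of_le (Nat.le_add_right k i) with h | h
    · intro hlt
      obtain rfl : i = 0 := by omega
      simp only [Nat.add_zero, List.get_eq_getElem] at hlt
      exact lt_irrefl _ hlt
    · intro hlt
      have h5 : l[k] < l[k+i] := hs k (k+i) hk (by omega) h
      simp only [List.get_eq_getElem] at hlt
      exact lt_irrefl _ (lt_trans hlt h5)
  calc (l.filter (fun a => decide (p a))).length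
      = ((l.take k ++ l.drop k).filter (fun a => decide (p a))).length := by rw [← hsplit]
    _ = k := by
        rw [List.filter_append, h1, h2, List.append_nil, List.length_take]
        omega

lemma sort_get_rank {S : Finset α} {x : α} (hx : x ∈ S)
    (hlen : (S.filter (· < x)).card < (S.sort (· ≤ ·)).length) :
    (S.sort (· ≤ ·)).get ⟨(S.filter (· < x)).card, hlen⟩ = x := by
  set l := S.sort (· ≤ ·) with hl
  have hxl : x ∈ l := (Finset.mem_sort _).mpr hx
  obtain ⟨k, hk⟩ := List.mem_iff_get.mp hxl
  have hsorted : l.Pairwise (· < ·) := S.sortedLT_sort.pairwise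
  have hcount : (S.filter (· < x)).card = (l.filter (fun a => decide (a < x))).length := by
    have h1 : (l.filter (fun a => decide (a < x))).length = l.countP (fun a => decide (a < x)) :=
      List.countP_eq_length_filter.symm
    have h2 : Multiset.countP (· < x) (l : Multiset α) = l.countP (fun a => decide (a < x)) :=
      Multiset.coe_countP _ _
    have h3 : (l : Multiset α) = S.1 := Finset.sort_eq S _
    have h4 : (S.filter (· < x)).card = Multiset.countP (· < x) S.1 :=
      (Multiset.countP_eq_card_filter _ _).symm
    rw [h1, ← h2, h3, h4]
  have hfil : (l.filter (fun a => decide (a < x))).length = (k : ℕ) := by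
    have := filter_length_sorted hsorted k.1 k.2 (· < x) (fun a => by rw [hk])
    exact this
  show l.get ⟨(S.filter (· < x)).card, hlen⟩ = x
  have heq : (⟨(S.filter (· < x)).card, hlen⟩ : Fin l.length) = k := by
    apply Fin.ext
    show (S.filter (· < x)).card = (k : ℕ)
    rw [hcount, hfil]
  rw [heq, hk]


end SortLemmas

section PermG

variable {N : ℕ}

/-- monotone across the edges of `E` -/
def mono (E : Finset (Fin N × Fin N)) (σ : Equiv.Perm (Fin N)) : Prop :=
  ∀ e ∈ E, σ e.1 ≤ σ e.2

instance (E : Finset (Fin N × Fin N)) (σ : Equiv.Perm (Fin N)) : Decidable (mono E σ) := by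
  unfold mono; infer_instance

/-- the "stabilizer": permutations preserving every component -/
def SD (E : Finset (Fin N × Fin N)) : Finset (Equiv.Perm (Fin N)) :=
  univ.filter (fun ρ => ∀ i, ρ i ∈ comp E i)

lemma chain {E : Finset (Fin N × Fin N)} {σ : Equiv.Perm (Fin N)} (hm : mono E σ) :
    ∀ n : ℕ, ∀ i j : Fin N, (j:ℕ) = (i:ℕ) + n → j ∈ comp E i → σ i ≤ σ j := by
  intro n
  induction n with
  | zero =>
    intro i j hij _
    have : i = j := Fin.ext (by omega)
    rw [this]
  | succ n ih =>
    intro i j hij hj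
    have hiN : (i:ℕ) + 1 < N := by have := j.isLt; omega
    set k : Fin N := ⟨(i:ℕ)+1, hiN⟩ with hk
    have hkc : k ∈ comp E i := by
      apply mem_comp_of_between hj (by simp only [hk]; omega) (by simp only [hk]; omega)
    have hedge : (i, k) ∈ E := edge_mem_of_adj (mem_comp_self E i) hkc (by simp [hk])
    have h1 : σ i ≤ σ k := hm (i, k) hedge
    have hjk : j ∈ comp E k := by rw [comp_eq_of_mem hkc]; exact hj
    exact le_trans h1 (ih k j (by simp only [hk]; omega) hjk)

lemma mono_on_comp {E : Finset (Fin N × Fin N)} {σ : Equiv.Perm (Fin N)} (hm : mono E σ)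
    {v a b : Fin N} (ha : a ∈ comp E v) (hb : b ∈ comp E v) (hab : a ≤ b) : σ a ≤ σ b := by
  have hba : b ∈ comp E a := comp_trans (comp_symm ha) hb
  exact chain hm ((b:ℕ) - (a:ℕ)) a b (by have := Fin.le_def.mp hab; omega) hba

lemma image_of_SD {E : Finset (Fin N × Fin N)} {ρ : Equiv.Perm (Fin N)} (hρ : ρ ∈ SD E)
    (v : Fin N) : (comp E v).image ρ = comp E v := by
  simp only [SD, mem_filter, mem_univ, true_and] at hρ
  apply Finset.eq_of_subset_of_card_le
  · intro x hx
    rw [Finset.mem_image] at hx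
    obtain ⟨j, hj, rfl⟩ := hx
    rw [← comp_eq_of_mem hj]
    exact hρ j
  · rw [Finset.card_image_of_injective _ ρ.injective]

lemma sort_image {S : Finset (Fin N)} {f : Equiv.Perm (Fin N)}
    (hmono : ∀ a ∈ S, ∀ b ∈ S, a ≤ b → f a ≤ f b) :
    Finset.sort (S.image f) (· ≤ ·) = (Finset.sort S (· ≤ ·)).map f := by
  have hperm : List.Perm (Finset.sort (S.image f) (· ≤ ·)) ((Finset.sort S (· ≤ ·)).map f) := by
    rw [← Multiset.coe_eq_coe]
    have h1 : (↑(Finset.sort (S.image f) (· ≤ ·)) : Multiset (Fin N))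
        = (S.image f).1 := Finset.sort_eq _ _
    have h2 : (↑((Finset.sort S (· ≤ ·)).map f) : Multiset (Fin N))
        = Multiset.map f S.1 := by
      rw [← Multiset.map_coe]
      congr 1
      exact Finset.sort_eq _ _
    rw [h1, h2]
    exact Finset.image_val_of_injOn (fun a _ b _ h => f.injective h)
  have hs1 : ((Finset.sort (S.image f) (· ≤ ·))).Pairwise (· ≤ ·) := Finset.pairwise_sort _ _
  have hs2 : ((Finset.sort S (· ≤ ·)).map f).Pairwise (· ≤ ·) := by
    rw [List.pairwise_map]
    apply List.Pairwise.imp_of_mem (R := (· ≤ ·))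
    · intro a b ha hb hab
      exact hmono a ((Finset.mem_sort _).mp ha) b ((Finset.mem_sort _).mp hb) hab
    · exact Finset.pairwise_sort _ _
  exact List.Perm.eq_of_pairwise' hs1 hs2 hperm

lemma rank_lt_card {S : Finset (Fin N)} {i : Fin N} (hi : i ∈ S) :
    (S.filter (· < i)).card < S.card := by
  apply Finset.card_lt_card
  rw [Finset.ssubset_iff_of_subset (Finset.filter_subset _ _)]
  exact ⟨i, hi, by simp⟩

/-- Master lemma: `permG E (σ * ρ) = σ` when `σ` is edge-monotone and `ρ` stabilizes comps. -/
lemma permG_mul {E : Finset (Fin N × Fin N)} {σ ρ : Equiv.Perm (Fin N)}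
    (hσ : mono E σ) (hρ : ρ ∈ SD E) : permG E (σ * ρ) = ⇑σ := by
  funext i
  set C := comp E i with hC
  have himg : C.image ⇑(σ * ρ) = C.image σ := by
    have : C.image ⇑(σ * ρ) = (C.image ρ).image σ := by
      rw [Finset.image_image]; rfl
    rw [this, image_of_SD hρ]
  have hmonoC : ∀ a ∈ C, ∀ b ∈ C, a ≤ b → σ a ≤ σ b := fun a ha b hb hab =>
    mono_on_comp hσ ha hb hab
  unfold permG
  rw [← hC, himg, sort_image hmonoC]
  have hrank : (C.filter (· < i)).card < (Finset.sort C (· ≤ ·)).length := by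
    rw [Finset.length_sort]
    exact rank_lt_card (mem_comp_self E i)
  rw [List.getD_eq_get _ _ ⟨_, by rwa [List.length_map]⟩]
  rw [List.get_eq_getElem, List.getElem_map]
  congr 1
  exact sort_get_rank (mem_comp_self E i) hrank

/-- `permG` is monotone along components. -/
lemma permG_mono {E : Finset (Fin N × Fin N)} (π : Equiv.Perm (Fin N)) {i j : Fin N}
    (hij : i ≤ j) (hj : j ∈ comp E i) : permG E π i ≤ permG E π j := by
  set C := comp E i with hC
  have hCj : comp E j = C := comp_eq_of_mem hj
  have hlen : (Finset.sort (C.image π) (· ≤ ·)).length = C.card := by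
    rw [Finset.length_sort, Finset.card_image_of_injective _ π.injective]
  have hrj : (C.filter (· < j)).card < (Finset.sort (C.image π) (· ≤ ·)).length := by
    rw [hlen]; exact rank_lt_card hj
  have hri : (C.filter (· < i)).card ≤ (C.filter (· < j)).card := by
    apply Finset.card_le_card
    intro a ha
    rw [Finset.mem_filter] at ha ⊢
    exact ⟨ha.1, lt_of_lt_of_le ha.2 hij⟩
  unfold permG
  rw [← hC, hCj]
  rw [List.getD_eq_get _ _ ⟨_, lt_of_le_of_lt hri hrj⟩, List.getD_eq_get _ _ ⟨_, hrj⟩]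
  exact List.Pairwise.rel_get_of_le (Finset.pairwise_sort _ _) hri

/-- if `permG E π = σ` then `σ` agrees with `π` on component images. -/
lemma image_eq_of_permG {E : Finset (Fin N × Fin N)} {π σ : Equiv.Perm (Fin N)}
    (h : permG E π = ⇑σ) (i : Fin N) : (comp E i).image σ = (comp E i).image π := by
  set C := comp E i with hC
  apply Finset.eq_of_subset_of_card_le
  · intro x hx
    rw [Finset.mem_image] at hx
    obtain ⟨j, hj, rfl⟩ := hx
    have hCj : comp E j = C := comp_eq_of_mem hj
    have : σ j = permG E π j := by rw [h]
    rw [this]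
    unfold permG
    rw [hCj]
    have hrj : (C.filter (· < j)).card < (Finset.sort (C.image π) (· ≤ ·)).length := by
      rw [Finset.length_sort, Finset.card_image_of_injective _ π.injective]
      exact rank_lt_card hj
    rw [List.getD_eq_get _ _ ⟨_, hrj⟩]
    have := List.get_mem (Finset.sort (C.image π) (· ≤ ·)) ⟨_, hrj⟩
    rwa [Finset.mem_sort] at this
  · rw [Finset.card_image_of_injective _ π.injective,
      Finset.card_image_of_injective _ σ.injective]

lemma mono_of_permG {E : Finset (Fin N × Fin N)} {π σ : Equiv.Perm (Fin N)}
    (hE : ∀ e ∈ E, (e.2 : ℕ) = (e.1 : ℕ) + 1) (h : permG E π = ⇑σ) : mono E σ := by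
  intro e he
  have h2 := hE e he
  have hc : e.2 ∈ comp E e.1 := mem_comp_of_edge he h2
  have := permG_mono (E := E) π (i := e.1) (j := e.2) (Fin.le_def.mpr (by omega)) hc
  rwa [h] at this

lemma inv_mem_SD_of_permG {E : Finset (Fin N × Fin N)} {π σ : Equiv.Perm (Fin N)}
    (h : permG E π = ⇑σ) : σ⁻¹ * π ∈ SD E := by
  simp only [SD, mem_filter, mem_univ, true_and]
  intro i
  have himg := image_eq_of_permG h i
  have : π i ∈ (comp E i).image π := Finset.mem_image_of_mem _ (mem_comp_self E i)
  rw [← himg, Finset.mem_image] at this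
  obtain ⟨c, hc, hcs⟩ := this
  have : (σ⁻¹ * π) i = c := by
    simp only [Equiv.Perm.mul_apply]
    rw [← hcs]
    simp
  rwa [this]

end PermG

section Counting

variable {N : ℕ}

lemma SD_one (E : Finset (Fin N × Fin N)) : (1 : Equiv.Perm (Fin N)) ∈ SD E := by
  simp only [SD, mem_filter, mem_univ, true_and]
  intro i
  exact mem_comp_self E i

lemma SD_inv {E : Finset (Fin N × Fin N)} {ρ : Equiv.Perm (Fin N)} (h : ρ ∈ SD E) :
    ρ⁻¹ ∈ SD E := by
  simp only [SD, mem_filter, mem_univ, true_and] at h ⊢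
  intro i
  have := h (ρ⁻¹ i)
  rw [show ρ (ρ⁻¹ i) = i from ρ.apply_symm_apply i] at this
  exact comp_symm this

lemma SD_mul {E : Finset (Fin N × Fin N)} {ρ τ : Equiv.Perm (Fin N)}
    (hρ : ρ ∈ SD E) (hτ : τ ∈ SD E) : ρ * τ ∈ SD E := by
  simp only [SD, mem_filter, mem_univ, true_and] at hρ hτ ⊢
  intro i
  have h1 : τ i ∈ comp E i := hτ i
  have h2 : ρ (τ i) ∈ comp E (τ i) := hρ (τ i)
  rw [comp_eq_of_mem h1] at h2
  exact h2

lemma SD_inter {D D' : Finset (Fin N × Fin N)} {ρ : Equiv.Perm (Fin N)}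
    (h : ρ ∈ SD D) (h' : ρ ∈ SD D') : ρ ∈ SD (D ∩ D') := by
  simp only [SD, mem_filter, mem_univ, true_and] at h h' ⊢
  intro i
  rw [comp_inter, mem_inter]
  exact ⟨h i, h' i⟩

lemma SD_union_of_left {D D' : Finset (Fin N × Fin N)} {ρ : Equiv.Perm (Fin N)}
    (h : ρ ∈ SD D) : ρ ∈ SD (D ∪ D') := by
  simp only [SD, mem_filter, mem_univ, true_and] at h ⊢
  intro i
  exact comp_mono Finset.subset_union_left i (h i)

lemma SD_union_of_right {D D' : Finset (Fin N × Fin N)} {ρ : Equiv.Perm (Fin N)}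
    (h : ρ ∈ SD D') : ρ ∈ SD (D ∪ D') := by
  simp only [SD, mem_filter, mem_univ, true_and] at h ⊢
  intro i
  exact comp_mono Finset.subset_union_right i (h i)

lemma mono_union {D D' : Finset (Fin N × Fin N)} {σ : Equiv.Perm (Fin N)}
    (h : mono D σ) (h' : mono D' σ) : mono (D ∪ D') σ := by
  intro e he
  rcases Finset.mem_union.mp he with h1 | h1
  · exact h e h1
  · exact h' e h1

/-- the fiber count -/
lemma fiber_card {E : Finset (Fin N × Fin N)} (hE : ∀ e ∈ E, (e.2 : ℕ) = (e.1 : ℕ) + 1)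
    (σ : Equiv.Perm (Fin N)) :
    (univ.filter (fun π : Equiv.Perm (Fin N) => permG E π = ⇑σ)).card
      = if mono E σ then (SD E).card else 0 := by
  split_ifs with hm
  · have hset : univ.filter (fun π : Equiv.Perm (Fin N) => permG E π = ⇑σ)
        = (SD E).image (fun ρ => σ * ρ) := by
      ext π
      simp only [mem_filter, mem_univ, true_and, Finset.mem_image]
      constructor
      · intro h
        refine ⟨σ⁻¹ * π, inv_mem_SD_of_permG h, ?_⟩
        group
      · rintro ⟨ρ, hρ, rfl⟩
        exact permG_mul hm hρ
    rw [hset]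
    exact Finset.card_image_of_injective _ (mul_right_injective σ)
  · rw [Finset.card_eq_zero, Finset.filter_eq_empty_iff]
    intro π _
    intro h
    exact hm (mono_of_permG hE h)

lemma sum_fG {D D' : Finset (Fin N × Fin N)}
    (hD : ∀ e ∈ D, (e.2 : ℕ) = (e.1 : ℕ) + 1) (hD' : ∀ e ∈ D', (e.2 : ℕ) = (e.1 : ℕ) + 1) :
    ∑ σ : Equiv.Perm (Fin N), ((univ.filter (fun π : Equiv.Perm (Fin N) => permG D π = ⇑σ)).card
        * (univ.filter (fun π : Equiv.Perm (Fin N) => permG D' π = ⇑σ)).card : ℕ)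
      = (univ.filter (fun σ : Equiv.Perm (Fin N) => mono (D ∪ D') σ)).card
        * ((SD D).card * (SD D').card) := by
  have hterm : ∀ σ : Equiv.Perm (Fin N),
      ((univ.filter (fun π : Equiv.Perm (Fin N) => permG D π = ⇑σ)).card
        * (univ.filter (fun π : Equiv.Perm (Fin N) => permG D' π = ⇑σ)).card : ℕ)
      = if mono (D ∪ D') σ then (SD D).card * (SD D').card else 0 := by
    intro σ
    rw [fiber_card hD σ, fiber_card hD' σ]
    by_cases h1 : mono D σ <;> by_cases h2 : mono D' σ
    · rw [if_pos h1, if_pos h2, if_pos (mono_union h1 h2)]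
    · rw [if_pos h1, if_neg h2,
        if_neg (fun h => h2 (fun e he => h e (Finset.mem_union_right D he))), mul_zero]
    · rw [if_neg h1, if_pos h2,
        if_neg (fun h => h1 (fun e he => h e (Finset.mem_union_left D' he))), zero_mul]
    · rw [if_neg h1, if_neg h2,
        if_neg (fun h => h1 (fun e he => h e (Finset.mem_union_left D' he))), zero_mul]
  rw [Finset.sum_congr rfl (fun σ _ => hterm σ)]
  rw [← Finset.sum_filter, Finset.sum_const, smul_eq_mul]

lemma MM_mul_SD_le {D D' : Finset (Fin N × Fin N)} :
    (univ.filter (fun σ : Equiv.Perm (Fin N) => mono (D ∪ D') σ)).card * (SD (D ∪ D')).card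
      ≤ Nat.factorial N := by
  classical
  set MM := univ.filter (fun σ : Equiv.Perm (Fin N) => mono (D ∪ D') σ) with hMM
  have h1 : MM.card * (SD (D ∪ D')).card = (MM ×ˢ SD (D ∪ D')).card :=
    (Finset.card_product _ _).symm
  rw [h1]
  have h2 : (MM ×ˢ SD (D ∪ D')).card ≤ (univ : Finset (Equiv.Perm (Fin N))).card := by
    apply Finset.card_le_card_of_injOn (fun p => p.1 * p.2)
    · intro p _
      exact mem_univ _
    · intro p hp q hq heq
      simp only [Finset.mem_coe, Finset.mem_product, hMM, mem_filter, mem_univ, true_and] at hp hq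
      have e1 : permG (D ∪ D') (p.1 * p.2) = ⇑p.1 := permG_mul hp.1 hp.2
      have e2 : permG (D ∪ D') (q.1 * q.2) = ⇑q.1 := permG_mul hq.1 hq.2
      simp only at heq
      have hfst : p.1 = q.1 := Equiv.coe_fn_injective
        (show ⇑p.1 = ⇑q.1 by rw [← e1, ← e2, heq])
      have hsnd : p.2 = q.2 := by
        rw [hfst] at heq
        exact mul_left_cancel heq
      exact Prod.ext hfst hsnd
  calc (MM ×ˢ SD (D ∪ D')).card ≤ (univ : Finset (Equiv.Perm (Fin N))).card := h2
    _ = Nat.factorial N := by rw [Finset.card_univ, Fintype.card_perm, Fintype.card_fin]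

lemma SD_mul_SD_le {D D' : Finset (Fin N × Fin N)} :
    (SD D).card * (SD D').card ≤ (SD (D ∪ D')).card * (SD (D ∩ D')).card := by
  classical
  have key : ((SD D) ×ˢ (SD D')).card
      ≤ (SD (D ∩ D')).card * (((SD D) ×ˢ (SD D')).image (fun p => p.1 * p.2)).card := by
    apply Finset.card_le_mul_card_image
    intro b hb
    obtain ⟨p₀, hp₀, hb₀⟩ := Finset.mem_image.mp hb
    apply Finset.card_le_card_of_injOn (fun p => p₀.1⁻¹ * p.1)
    · intro p hp
      simp only [mem_coe, mem_filter, Finset.mem_product] at hp hp₀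
      obtain ⟨⟨hp1, hp2⟩, hpb⟩ := hp
      obtain ⟨hq1, hq2⟩ := hp₀
      have hD1 : p₀.1⁻¹ * p.1 ∈ SD D := SD_mul (SD_inv hq1) hp1
      have halg : p₀.1⁻¹ * p.1 = p₀.2 * p.2⁻¹ := by
        have : p.1 * p.2 = p₀.1 * p₀.2 := by rw [hpb, hb₀]
        have h := this
        calc p₀.1⁻¹ * p.1 = p₀.1⁻¹ * (p.1 * p.2) * p.2⁻¹ := by group
          _ = p₀.1⁻¹ * (p₀.1 * p₀.2) * p.2⁻¹ := by rw [h]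
          _ = p₀.2 * p.2⁻¹ := by group
      have hD2 : p₀.1⁻¹ * p.1 ∈ SD D' := by
        rw [halg]
        exact SD_mul hq2 (SD_inv hp2)
      exact SD_inter hD1 hD2
    · intro p hp q hq heq
      simp only [mem_coe, mem_filter, Finset.mem_product] at hp hq
      simp only at heq
      have h1 : p.1 = q.1 := by
        have := heq
        calc p.1 = p₀.1 * (p₀.1⁻¹ * p.1) := by group
          _ = p₀.1 * (p₀.1⁻¹ * q.1) := by rw [this]
          _ = q.1 := by group
      have h2 : p.2 = q.2 := by
        have hb1 : p.1 * p.2 = b := hp.2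
        have hb2 : q.1 * q.2 = b := hq.2
        rw [← h1] at hb2
        exact mul_left_cancel (hb1.trans hb2.symm)
      exact Prod.ext h1 h2
  have himg : ((SD D) ×ˢ (SD D')).image (fun p => p.1 * p.2) ⊆ SD (D ∪ D') := by
    intro b hb
    obtain ⟨p, hp, rfl⟩ := Finset.mem_image.mp hb
    rw [Finset.mem_product] at hp
    exact SD_mul (SD_union_of_left hp.1) (SD_union_of_right hp.2)
  calc (SD D).card * (SD D').card = ((SD D) ×ˢ (SD D')).card := (Finset.card_product _ _).symm
    _ ≤ (SD (D ∩ D')).card * (((SD D) ×ˢ (SD D')).image (fun p => p.1 * p.2)).card := key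
    _ ≤ (SD (D ∩ D')).card * (SD (D ∪ D')).card :=
        Nat.mul_le_mul_left _ (Finset.card_le_card himg)
    _ = (SD (D ∪ D')).card * (SD (D ∩ D')).card := Nat.mul_comm _ _

end Counting

section Final

variable {N : ℕ}

lemma comp_card_le {L : ℕ} (hL : 10 ≤ L) {D E : Finset (Fin N × Fin N)} (hsub : E ⊆ D)
    (hsp : LSparse L D) (v : Fin N) : (comp E v).card ≤ L := by
  have hN : 0 < N := v.pos
  set C := comp E v with hCdef
  have hvC : v ∈ C := mem_comp_self E v
  have hne : C.Nonempty := ⟨v, hvC⟩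
  set m := C.min' hne with hm
  set M := C.max' hne with hM
  have hmC : m ∈ C := Finset.min'_mem _ _
  have hMC : M ∈ C := Finset.max'_mem _ _
  have hmM : (m:ℕ) ≤ (M:ℕ) := Fin.le_def.mp (Finset.min'_le _ _ hMC)
  have hMN : (M:ℕ) < N := M.isLt
  have hcard : C.card ≤ (M:ℕ) - (m:ℕ) + 1 := by
    have himg : C.image (Fin.val) ⊆ Finset.Icc (m:ℕ) (M:ℕ) := by
      intro x hx
      obtain ⟨w, hw, rfl⟩ := Finset.mem_image.mp hx
      rw [Finset.mem_Icc]
      exact ⟨Fin.le_def.mp (Finset.min'_le _ _ hw), Fin.le_def.mp (Finset.le_max' _ _ hw)⟩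
    calc C.card = (C.image Fin.val).card :=
          (Finset.card_image_of_injective _ Fin.val_injective).symm
      _ ≤ (Finset.Icc (m:ℕ) (M:ℕ)).card := Finset.card_le_card himg
      _ = (M:ℕ) - (m:ℕ) + 1 := by rw [Nat.card_Icc]; omega
  have hMm : M ∈ comp E m := comp_trans (comp_symm hmC) hMC
  set t := min (L-1) ((M:ℕ) - (m:ℕ)) with ht
  have hinj : t ≤ (D.filter (fun e => (m:ℕ) ≤ (e.1 : ℕ) ∧ (e.2 : ℕ) ≤ (m:ℕ) + L - 1)).card := by
    rw [← Finset.card_range t]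
    apply Finset.card_le_card_of_injOn
      (fun k => ((⟨((m:ℕ)+k) % N, Nat.mod_lt _ hN⟩ : Fin N),
                 (⟨((m:ℕ)+k+1) % N, Nat.mod_lt _ hN⟩ : Fin N)))
    · intro k hk
      rw [Finset.mem_coe, Finset.mem_range] at hk
      have hk1 : (m:ℕ) + k < N := by omega
      have hk2 : (m:ℕ) + k + 1 < N := by omega
      have e1 : ((m:ℕ)+k) % N = (m:ℕ)+k := Nat.mod_eq_of_lt hk1
      have e2 : ((m:ℕ)+k+1) % N = (m:ℕ)+k+1 := Nat.mod_eq_of_lt hk2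
      have ha : (⟨((m:ℕ)+k) % N, Nat.mod_lt _ hN⟩ : Fin N) ∈ comp E m := by
        apply mem_comp_of_between hMm
        · simp only [e1]; omega
        · simp only [e1]; omega
      have hb : (⟨((m:ℕ)+k+1) % N, Nat.mod_lt _ hN⟩ : Fin N) ∈ comp E m := by
        apply mem_comp_of_between hMm
        · simp only [e2]; omega
        · simp only [e2]; omega
      have hedge := edge_mem_of_adj ha hb (by simp only [e1, e2])
      rw [Finset.mem_coe, Finset.mem_filter]
      refine ⟨hsub hedge, ?_, ?_⟩
      · simp only [e1]; omega
      · simp only [e2]; omega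
    · intro k hk l hl heq
      rw [Finset.mem_coe, Finset.mem_range] at hk hl
      have := congrArg (fun p => ((p.1 : Fin N) : ℕ)) heq
      simp only at this
      have e1 : ((m:ℕ)+k) % N = (m:ℕ)+k := Nat.mod_eq_of_lt (by omega)
      have e2 : ((m:ℕ)+l) % N = (m:ℕ)+l := Nat.mod_eq_of_lt (by omega)
      rw [e1, e2] at this
      omega
  have hsp' := hsp (m:ℕ)
  have h3t : 3 * t ≤ L := by
    have : (t:ℝ) ≤ (L:ℝ)/3 := le_trans (Nat.cast_le.mpr hinj) hsp'
    have h3 : (3 * t : ℝ) ≤ (L:ℝ) := by linarith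
    exact_mod_cast h3
  omega

lemma mem_comp_erase {E : Finset (Fin N × Fin N)} {e : Fin N × Fin N} {x w : Fin N}
    (h : w ∈ comp E x) (hlt : max (x:ℕ) (w:ℕ) < (e.2:ℕ)) : w ∈ comp (E.erase e) x := by
  rw [mem_comp] at h ⊢
  intro f hf h1 h2
  refine Finset.mem_erase.mpr ⟨?_, h f hf h1 h2⟩
  intro hfe
  have := congrArg (fun p => ((p.2 : Fin N) : ℕ)) hfe
  omega

lemma SD_card_le (B : ℕ) : ∀ (n : ℕ) (E : Finset (Fin N × Fin N)), E.card = n →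
    (∀ e ∈ E, (e.2 : ℕ) = (e.1 : ℕ) + 1) → (∀ v, (comp E v).card ≤ B) →
    (SD E).card ≤ B ^ n := by
  intro n
  induction n using Nat.strong_induction_on with
  | _ n ih =>
    intro E hcard hE hsize
    rcases Nat.eq_zero_or_pos n with hn | hn
    · subst hn
      have hEe : E = ∅ := Finset.card_eq_zero.mp hcard
      subst hEe
      have : SD (∅ : Finset (Fin N × Fin N)) = {1} := by
        ext ρ
        simp only [SD, mem_filter, mem_univ, true_and, Finset.mem_singleton]
        constructor
        · intro h
          apply Equiv.ext
          intro i
          have := h i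
          rw [comp_empty, Finset.mem_singleton] at this
          simp [this]
        · rintro rfl i
          rw [comp_empty]
          simp
      rw [this]
      simp
    · have hEne : E.Nonempty := by
        rw [← Finset.card_pos, hcard]; exact hn
      obtain ⟨e, he, hmax⟩ := Finset.exists_max_image E (fun f => ((f.1 : Fin N) : ℕ)) hEne
      have hv : (e.2:ℕ) = (e.1:ℕ) + 1 := hE e he
      set v := e.2 with hvdef
      set E₀ := E.erase e with hE₀
      have hcard₀ : E₀.card = n - 1 := by
        rw [hE₀, Finset.card_erase_of_mem he, hcard]
      -- all members of comp E v are ≤ v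
      have hle : ∀ w ∈ comp E v, (w:ℕ) ≤ (v:ℕ) := by
        intro w hw
        by_contra hgt
        push_neg at hgt
        have hwN : (v:ℕ) + 1 < N := lt_of_le_of_lt hgt w.isLt
        set c : Fin N := ⟨(v:ℕ)+1, hwN⟩ with hc
        have hcC : c ∈ comp E v := by
          apply mem_comp_of_between hw
          · simp only [hc]; omega
          · simp only [hc]; omega
        have hedge : (v, c) ∈ E := edge_mem_of_adj (mem_comp_self E v) hcC (by simp only [hc])
        have := hmax (v, c) hedge
        simp only at this
        omega
      -- the injection
      have hkey : (SD E).card ≤ ((comp E v) ×ˢ (SD E₀)).card := by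
        apply Finset.card_le_card_of_injOn
          (fun ρ => (ρ v, Equiv.swap (ρ v) v * ρ))
        · intro ρ hρ
          simp only [SD, mem_coe, mem_filter, mem_univ, true_and] at hρ
          rw [Finset.mem_coe, Finset.mem_product]
          constructor
          · exact hρ v
          · simp only [SD, mem_filter, mem_univ, true_and]
            intro j
            by_cases hj : j = v
            · subst hj
              simp only [Equiv.Perm.mul_apply, Equiv.swap_apply_left]
              exact mem_comp_self E₀ _
            · have hbj : ρ j ∈ comp E j := hρ j
              have hjρ : ρ j ≠ ρ v := fun h => hj (ρ.injective h)
              by_cases hb : ρ j = v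
              · -- τ j = ρ v
                have hτ : (Equiv.swap (ρ v) v * ρ) j = ρ v := by
                  simp only [Equiv.Perm.mul_apply, hb, Equiv.swap_apply_right]
                rw [hτ]
                have hvj : v ∈ comp E j := hb ▸ hbj
                have haj : ρ v ∈ comp E j := by
                  rw [← comp_eq_of_mem hvj] at hbj ⊢
                  exact hρ v
                have hav : ρ v ≠ v := by
                  intro h
                  exact hj (ρ.injective (hb.trans h.symm))
                have h1 : ((ρ v : Fin N):ℕ) ≤ (v:ℕ) := hle _ (hρ v)
                have h2 : (j:ℕ) ≤ (v:ℕ) := hle _ (comp_symm hvj)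
                apply mem_comp_erase haj
                have hav' : ((ρ v : Fin N):ℕ) ≠ (v:ℕ) := fun h => hav (Fin.ext h)
                have hj' : (j:ℕ) ≠ (v:ℕ) := fun h => hj (Fin.ext h)
                rw [← hvdef] at *
                omega
              · -- τ j = ρ j
                have hτ : (Equiv.swap (ρ v) v * ρ) j = ρ j := by
                  simp only [Equiv.Perm.mul_apply]
                  exact Equiv.swap_apply_of_ne_of_ne hjρ hb
                rw [hτ]
                by_cases hvin : v ∈ comp E j
                · have hjv : j ∈ comp E v := comp_symm hvin
                  have hbv : ρ j ∈ comp E v := by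
                    rw [comp_eq_of_mem hvin]
                    exact hbj
                  have h1 : (j:ℕ) ≤ (v:ℕ) := hle _ hjv
                  have h2 : ((ρ j : Fin N):ℕ) ≤ (v:ℕ) := hle _ hbv
                  have hj' : (j:ℕ) ≠ (v:ℕ) := fun h => hj (Fin.ext h)
                  have hb' : ((ρ j : Fin N):ℕ) ≠ (v:ℕ) := fun h => hb (Fin.ext h)
                  apply mem_comp_erase hbj
                  omega
                · have hbj0 := hbj
                  rw [mem_comp] at hbj ⊢
                  intro f hf h1 h2
                  refine Finset.mem_erase.mpr ⟨?_, hbj f hf h1 h2⟩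
                  intro hfe
                  have hf1 := congrArg (fun p => ((p.1 : Fin N) : ℕ)) hfe
                  have hf2 := congrArg (fun p => ((p.2 : Fin N) : ℕ)) hfe
                  exact hvin (mem_comp_of_between hbj0 (by omega) (by omega))
        · intro ρ hρ τ hτ heq
          simp only [Prod.mk.injEq] at heq
          obtain ⟨h1, h2⟩ := heq
          rw [h1] at h2
          exact mul_left_cancel h2
      have hB : (comp E v).card ≤ B := hsize v
      calc (SD E).card ≤ ((comp E v) ×ˢ (SD E₀)).card := hkey
        _ = (comp E v).card * (SD E₀).card := Finset.card_product _ _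
        _ ≤ B * B ^ (n-1) := Nat.mul_le_mul hB (ih (n-1) (by omega) E₀ hcard₀
            (fun f hf => hE f (Finset.mem_of_mem_erase hf))
            (fun w => le_trans (Finset.card_le_card (comp_mono (Finset.erase_subset _ _) w))
              (hsize w)))
        _ = B ^ n := by
          rw [← pow_succ']
          congr 1
          omega

end Final

/-- **Lemma (exponential bound)**: if `G` and `G'` are `L`-sparse shuffle graphs then
`f_{G,G'} ≤ (L!)^{|E(G,G')|}`. -/
theorem fGG_le_pow_of_LSparse (N L : ℕ) (hL : 10 ≤ L) (D D' : Finset (Fin N × Fin N))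
    (hD : ∀ e ∈ D, (e.2 : ℕ) = (e.1 : ℕ) + 1)
    (hD' : ∀ e ∈ D', (e.2 : ℕ) = (e.1 : ℕ) + 1)
    (hsp : LSparse L D) (hsp' : LSparse L D') :
    fGG D D' ≤ (Nat.factorial L : ℝ) ^ ((D ∩ D').card) := by

  classical
  set k := (D ∩ D').card with hk
  have hEcap : ∀ e ∈ D ∩ D', ((e.2 : Fin N) : ℕ) = ((e.1 : Fin N) : ℕ) + 1 :=
    fun e he => hD e (Finset.mem_of_mem_inter_left he)
  have hsize : ∀ v : Fin N, (comp (D ∩ D') v).card ≤ L :=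
    fun v => comp_card_le hL Finset.inter_subset_left hsp v
  have hSDcap : (SD (D ∩ D')).card ≤ L ^ k := SD_card_le L k (D ∩ D') rfl hEcap hsize
  have hSDcap' : (SD (D ∩ D')).card ≤ (Nat.factorial L) ^ k :=
    le_trans hSDcap (Nat.pow_le_pow_left (Nat.self_le_factorial L) k)
  have hsum := sum_fG hD hD'
  set a := (univ.filter (fun σ : Equiv.Perm (Fin N) => mono (D ∪ D') σ)).card with ha
  set b := (SD D).card with hb
  set b' := (SD D').card with hb'
  set cu := (SD (D ∪ D')).card with hcu
  set ci := (SD (D ∩ D')).card with hci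
  have hA : a * (b * b') ≤ Nat.factorial N * (Nat.factorial L) ^ k := by
    calc a * (b * b') ≤ a * (cu * ci) := Nat.mul_le_mul_left a SD_mul_SD_le
      _ = (a * cu) * ci := by ring
      _ ≤ Nat.factorial N * ci := Nat.mul_le_mul_right ci MM_mul_SD_le
      _ ≤ Nat.factorial N * (Nat.factorial L) ^ k :=
          Nat.mul_le_mul_left _ hSDcap'
  have hsumR : ∑ σ : Equiv.Perm (Fin N), fG D σ * fG D' σ = ((a * (b * b') : ℕ) : ℝ) := by
    have hterm : ∀ σ : Equiv.Perm (Fin N), fG D σ * fG D' σ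
        = (((univ.filter (fun π : Equiv.Perm (Fin N) => permG D π = ⇑σ)).card
          * (univ.filter (fun π : Equiv.Perm (Fin N) => permG D' π = ⇑σ)).card : ℕ) : ℝ) := by
      intro σ
      unfold fG
      push_cast
      ring
    rw [Finset.sum_congr rfl (fun σ _ => hterm σ), ← Nat.cast_sum, hsum]
  unfold fGG
  rw [hsumR, div_le_iff₀ (by positivity)]
  calc ((a * (b * b') : ℕ) : ℝ) ≤ ((Nat.factorial N * (Nat.factorial L) ^ k : ℕ) : ℝ) :=
        Nat.cast_le.mpr hA
    _ = (Nat.factorial L : ℝ) ^ k * (Nat.factorial N : ℝ) := by push_cast; ring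


end RiffleShuffle
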